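/- Fix an integer m ≥ 2 and two distinct letters 1 and 2 in the alphabet Fin m. For every natural number d, the number of words v : Fin d → Fin m with no linear occurrence of the factor 12 (i.e., no index i with i+1 < d, v(i) = 1 and v(i+1) = 2) equals the coefficient of t^d in the formal power series (1 − m·t + t²)⁻¹ ∈ ℤ⟦t⟧. Equivalently, the number W_{12}(d) of length-d words containing a linear occurrence of 12 equals the coefficient of t^d in t²·((1 − m·t)·(1 − m·t + t²))⁻¹. -/

import Mathlib

open PowerSeries

namespace Stmt14

variable {m : ℕ} (x y : Fin m)

/-- Occurrence of the factor `xy` in a word. -/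
def occ {d : ℕ} (v : Fin d → Fin m) : Prop :=
  ∃ i : ℕ, ∃ h : i + 1 < d, v ⟨i, Nat.lt_of_succ_lt h⟩ = x ∧ v ⟨i + 1, h⟩ = y

theorem occ_snoc {n : ℕ} (u : Fin n → Fin m) (c : Fin m) :
    occ x y (Fin.snoc u c) ↔
      occ x y u ∨ ∃ h : 0 < n, u ⟨n - 1, Nat.sub_lt h one_pos⟩ = x ∧ c = y := by
  constructor
  · rintro ⟨i, h, hx, hy⟩
    rcases lt_or_ge (i + 1) n with h' | h'
    · refine Or.inl ⟨i, h', ?_, ?_⟩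
      · have : (⟨i, Nat.lt_of_succ_lt h⟩ : Fin (n + 1)) =
            Fin.castSucc ⟨i, Nat.lt_of_succ_lt h'⟩ := rfl
        rw [this, Fin.snoc_castSucc] at hx; exact hx
      · have : (⟨i + 1, h⟩ : Fin (n + 1)) = Fin.castSucc ⟨i + 1, h'⟩ := rfl
        rw [this, Fin.snoc_castSucc] at hy; exact hy
    · have hin : i + 1 = n := le_antisymm (Nat.lt_succ_iff.mp h) h'
      have hpos : 0 < n := hin ▸ Nat.succ_pos i
      refine Or.inr ⟨hpos, ?_, ?_⟩
      · have hi : i = n - 1 := by omega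
        have : (⟨i, Nat.lt_of_succ_lt h⟩ : Fin (n + 1)) =
            Fin.castSucc ⟨n - 1, Nat.sub_lt hpos one_pos⟩ := by
          exact Fin.ext (by simpa using hi)
        rw [this, Fin.snoc_castSucc] at hx; exact hx
      · have : (⟨i + 1, h⟩ : Fin (n + 1)) = Fin.last n := Fin.ext (by simpa using hin)
        rw [this, Fin.snoc_last] at hy; exact hy
  · rintro (⟨i, h, hx, hy⟩ | ⟨hpos, hx, hy⟩)
    · refine ⟨i, Nat.lt_succ_of_lt h, ?_, ?_⟩
      · have : (⟨i, Nat.lt_of_succ_lt (Nat.lt_succ_of_lt h)⟩ : Fin (n + 1)) =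
            Fin.castSucc ⟨i, Nat.lt_of_succ_lt h⟩ := rfl
        rw [this, Fin.snoc_castSucc]; exact hx
      · have : (⟨i + 1, Nat.lt_succ_of_lt h⟩ : Fin (n + 1)) =
            Fin.castSucc ⟨i + 1, h⟩ := rfl
        rw [this, Fin.snoc_castSucc]; exact hy
    · refine ⟨n - 1, by omega, ?_, ?_⟩
      · have : (⟨n - 1, by omega⟩ : Fin (n + 1)) =
            Fin.castSucc ⟨n - 1, Nat.sub_lt hpos one_pos⟩ := rfl
        rw [this, Fin.snoc_castSucc]; exact hx
      · have : (⟨n - 1 + 1, by omega⟩ : Fin (n + 1)) = Fin.last n :=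
          Fin.ext (by simp; omega)
        rw [this, Fin.snoc_last]; exact hy

theorem occ_init {n : ℕ} {u : Fin (n + 1) → Fin m} (h : occ x y (Fin.init u)) : occ x y u := by
  have := (occ_snoc x y (Fin.init u) (u (Fin.last n))).mpr (Or.inl h)
  rwa [Fin.snoc_init_self] at this

variable (hxy : x ≠ y)

/-- The key equivalence giving the recurrence. -/
noncomputable def recEquiv (d : ℕ) :
    {v : Fin (d + 2) → Fin m // ¬ occ x y v} ⊕ {v : Fin d → Fin m // ¬ occ x y v} ≃
      {v : Fin (d + 1) → Fin m // ¬ occ x y v} × Fin m where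
  toFun s := s.elim
    (fun w => (⟨Fin.init w.1, fun h => w.2 (occ_init x y h)⟩, w.1 (Fin.last (d + 1))))
    (fun w => (⟨Fin.snoc w.1 x, fun h => by
        rcases (occ_snoc x y w.1 x).mp h with h | ⟨_, _, hc⟩
        · exact w.2 h
        · exact hxy hc⟩, y))
  invFun p :=
    if h : p.1.1 (Fin.last d) = x ∧ p.2 = y then
      Sum.inr ⟨Fin.init p.1.1, fun hh => p.1.2 (occ_init x y hh)⟩
    else
      Sum.inl ⟨Fin.snoc p.1.1 p.2, fun hh => by
        rcases (occ_snoc x y p.1.1 p.2).mp hh with hh | ⟨_, hx', hy'⟩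
        · exact p.1.2 hh
        · exact h ⟨hx', hy'⟩⟩
  left_inv s := by
    rcases s with ⟨w, hw⟩ | ⟨w, hw⟩
    · simp only [Sum.elim_inl]
      erw [dif_neg]
      · exact congrArg Sum.inl (Subtype.ext (Fin.snoc_init_self w))
      · rintro ⟨hx', hy'⟩
        apply hw
        have : occ x y (Fin.snoc (Fin.init w) (w (Fin.last (d + 1)))) :=
          (occ_snoc x y _ _).mpr (Or.inr ⟨Nat.succ_pos d, hx', hy'⟩)
        rwa [Fin.snoc_init_self] at this
    · simp only [Sum.elim_inr]
      erw [dif_pos (show Fin.snoc (α := fun _ => Fin m) w x (Fin.last d) = x ∧ y = y from ⟨by simp, rfl⟩)]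
      exact congrArg Sum.inr (Subtype.ext (by simp))
  right_inv p := by
    obtain ⟨⟨u, hu⟩, c⟩ := p
    by_cases h : u (Fin.last d) = x ∧ c = y
    · dsimp only
      rw [dif_pos h]
      simp only [Sum.elim_inr]
      have hs : Fin.snoc (Fin.init u) x = u := by
        conv_rhs => rw [← Fin.snoc_init_self u]
        rw [h.1]
      exact Prod.ext (Subtype.ext hs) h.2.symm
    · dsimp only
      rw [dif_neg h]
      simp only [Sum.elim_inl]
      exact Prod.ext (Subtype.ext (by simp)) (by simp)

noncomputable def wcard (d : ℕ) : ℕ := Nat.card {v : Fin d → Fin m // ¬ occ x y v}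

include hxy in
theorem wcard_rec (d : ℕ) : wcard x y (d + 2) + wcard x y d = wcard x y (d + 1) * m := by
  have h := Nat.card_congr (recEquiv x y hxy d)
  rwa [Nat.card_sum, Nat.card_prod, Nat.card_eq_fintype_card (α := Fin m),
    Fintype.card_fin] at h

theorem wcard_zero : wcard x y 0 = 1 := by
  rw [wcard, Nat.card_congr (Equiv.subtypeUnivEquiv fun v => by rintro ⟨i, h, -⟩; omega)]
  simp [Nat.card_eq_fintype_card]

theorem wcard_one : wcard x y 1 = m := by
  rw [wcard, Nat.card_congr (Equiv.subtypeUnivEquiv fun v => by rintro ⟨i, h, -⟩; omega),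
    Nat.card_congr (Equiv.funUnique (Fin 1) (Fin m)), Nat.card_eq_fintype_card,
    Fintype.card_fin]

/-- the series `1 - m t + t^2`. -/
noncomputable def S (m : ℕ) : PowerSeries ℤ :=
  1 - PowerSeries.C (R := ℤ) (m : ℤ) * PowerSeries.X + PowerSeries.X ^ 2

/-- the series `1 - m t`. -/
noncomputable def G (m : ℕ) : PowerSeries ℤ := 1 - PowerSeries.C (R := ℤ) (m : ℤ) * PowerSeries.X

theorem isUnit_S (m : ℕ) : IsUnit (S m) := by
  rw [PowerSeries.isUnit_iff_constantCoeff]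
  simp [S]

theorem isUnit_G (m : ℕ) : IsUnit (G m) := by
  rw [PowerSeries.isUnit_iff_constantCoeff]
  simp [G]

theorem invS_mul (m : ℕ) : Ring.inverse (S m) * S m = 1 :=
  Ring.inverse_mul_cancel _ (isUnit_S m)

theorem S_expand (m : ℕ) : Ring.inverse (S m) * S m
    = Ring.inverse (S m) - PowerSeries.C (R := ℤ) (m : ℤ) * (PowerSeries.X * Ring.inverse (S m))
      + PowerSeries.X * (PowerSeries.X * Ring.inverse (S m)) := by
  rw [S]; ring

theorem coeff_invS_zero (m : ℕ) : coeff (R := ℤ) 0 (Ring.inverse (S m)) = 1 := by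
  have h := congrArg (coeff (R := ℤ) 0) (invS_mul m)
  rw [S_expand] at h
  simpa using h

theorem coeff_invS_one (m : ℕ) : coeff (R := ℤ) 1 (Ring.inverse (S m)) = m := by
  have h := congrArg (coeff (R := ℤ) 1) (invS_mul m)
  rw [S_expand] at h
  simp only [map_add, map_sub, PowerSeries.coeff_C_mul, PowerSeries.coeff_succ_X_mul,
    PowerSeries.coeff_one, PowerSeries.coeff_zero_eq_constantCoeff, map_mul,
    PowerSeries.constantCoeff_X, zero_mul, coeff_invS_zero, mul_one] at h
  omega

theorem coeff_invS_rec (m d : ℕ) : coeff (R := ℤ) (d + 2) (Ring.inverse (S m))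
    = m * coeff (R := ℤ) (d + 1) (Ring.inverse (S m)) - coeff (R := ℤ) d (Ring.inverse (S m)) := by
  have h := congrArg (coeff (R := ℤ) (d + 2)) (invS_mul m)
  rw [S_expand] at h
  simp only [map_add, map_sub, PowerSeries.coeff_C_mul, PowerSeries.coeff_succ_X_mul,
    PowerSeries.coeff_one, Nat.succ_ne_zero, if_false] at h
  linarith

include hxy in
theorem wcard_eq (d : ℕ) :
    ((wcard x y d : ℤ) = coeff (R := ℤ) d (Ring.inverse (S m))) ∧
      ((wcard x y (d + 1) : ℤ) = coeff (R := ℤ) (d + 1) (Ring.inverse (S m))) := by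
  induction d with
  | zero =>
    constructor
    · rw [wcard_zero, coeff_invS_zero]; norm_num
    · rw [wcard_one, coeff_invS_one]
  | succ n ih =>
    refine ⟨ih.2, ?_⟩
    have h1 := wcard_rec x y hxy n
    have h2 : ((wcard x y (n + 2) : ℤ)) = (wcard x y (n + 1) : ℤ) * m - wcard x y n := by
      have := congrArg (fun k : ℕ => (k : ℤ)) h1
      push_cast at this ⊢
      linarith
    rw [h2, coeff_invS_rec, ih.1, ih.2]
    ring

theorem inverse_G (m : ℕ) :
    Ring.inverse (G m) = PowerSeries.mk fun n => (m : ℤ) ^ n := by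
  have hmul : G m * PowerSeries.mk (fun n => (m : ℤ) ^ n) = 1 := by
    have e : G m * PowerSeries.mk (fun n => (m : ℤ) ^ n)
        = PowerSeries.mk (fun n => (m : ℤ) ^ n)
          - PowerSeries.C (R := ℤ) (m : ℤ) *
            (PowerSeries.X * PowerSeries.mk fun n => (m : ℤ) ^ n) := by
      rw [G]; ring
    rw [e]
    ext n
    cases n with
    | zero => simp
    | succ k =>
      simp only [map_sub, PowerSeries.coeff_C_mul, PowerSeries.coeff_succ_X_mul,
        PowerSeries.coeff_mk, PowerSeries.coeff_one, Nat.succ_ne_zero, if_false]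
      ring
  calc Ring.inverse (G m) = Ring.inverse (G m) * (G m * PowerSeries.mk fun n => (m : ℤ) ^ n) := by
        rw [hmul, mul_one]
    _ = _ := by rw [← mul_assoc, Ring.inverse_mul_cancel _ (isUnit_G m), one_mul]

theorem X2_inverse (m : ℕ) :
    (PowerSeries.X ^ 2 : PowerSeries ℤ) * Ring.inverse (G m * S m)
      = Ring.inverse (G m) - Ring.inverse (S m) := by
  have hU : IsUnit (G m * S m) := (isUnit_G m).mul (isUnit_S m)
  apply hU.mul_left_cancel
  have h1 : (G m * S m) * (PowerSeries.X ^ 2 * Ring.inverse (G m * S m))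
      = PowerSeries.X ^ 2 := by
    rw [mul_comm, mul_assoc, Ring.inverse_mul_cancel _ hU, mul_one]
  have h2 : (G m * S m) * (Ring.inverse (G m) - Ring.inverse (S m))
      = PowerSeries.X ^ 2 := by
    have e1 : (G m * S m) * Ring.inverse (G m) = S m := by
      rw [mul_comm (G m), mul_assoc, mul_comm (G m), Ring.inverse_mul_cancel _ (isUnit_G m),
        mul_one]
    have e2 : (G m * S m) * Ring.inverse (S m) = G m := by
      rw [mul_assoc, mul_comm (S m), Ring.inverse_mul_cancel _ (isUnit_S m), mul_one]
    rw [mul_sub, e1, e2, S, G]; ring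
  rw [h1, h2]

theorem total_card (d : ℕ) :
    Nat.card {v : Fin d → Fin m // occ x y v} + wcard x y d = m ^ d := by
  classical
  rw [wcard, ← Nat.card_sum, Nat.card_congr (Equiv.sumCompl _), Nat.card_eq_fintype_card]
  simp

end Stmt14

theorem stmt_14 (m : ℕ) (hm : 2 ≤ m) (x y : Fin m) (hxy : x ≠ y) (d : ℕ) :
    (Nat.card {v : Fin d → Fin m // ¬ ∃ i : ℕ, ∃ h : i + 1 < d,
        v ⟨i, Nat.lt_of_succ_lt h⟩ = x ∧ v ⟨i + 1, h⟩ = y} : ℤ) =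
      PowerSeries.coeff (R := ℤ) d
        (Ring.inverse (1 - PowerSeries.C (R := ℤ) (m : ℤ) * PowerSeries.X + PowerSeries.X ^ 2 :
          PowerSeries ℤ)) ∧
    (Nat.card {v : Fin d → Fin m // ∃ i : ℕ, ∃ h : i + 1 < d,
        v ⟨i, Nat.lt_of_succ_lt h⟩ = x ∧ v ⟨i + 1, h⟩ = y} : ℤ) =
      PowerSeries.coeff (R := ℤ) d
        (PowerSeries.X ^ 2 *
          Ring.inverse ((1 - PowerSeries.C (R := ℤ) (m : ℤ) * PowerSeries.X) *
            (1 - PowerSeries.C (R := ℤ) (m : ℤ) * PowerSeries.X + PowerSeries.X ^ 2) :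
            PowerSeries ℤ)) := by
  have h1 : (Stmt14.wcard x y d : ℤ) = PowerSeries.coeff (R := ℤ) d (Ring.inverse (Stmt14.S m)) :=
    (Stmt14.wcard_eq x y hxy d).1
  constructor
  · exact h1
  · have h2 := Stmt14.total_card x y d
    have h3 : (Nat.card {v : Fin d → Fin m // Stmt14.occ x y v} : ℤ)
        = (m : ℤ) ^ d - Stmt14.wcard x y d := by
      have := congrArg (fun k : ℕ => (k : ℤ)) h2
      push_cast at this
      linarith
    show (Nat.card {v : Fin d → Fin m // Stmt14.occ x y v} : ℤ) = _
    rw [h3, h1]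
    have h4 := congrArg (PowerSeries.coeff (R := ℤ) d) (Stmt14.X2_inverse m)
    rw [show ((1 - PowerSeries.C (R := ℤ) (m : ℤ) * PowerSeries.X) *
        (1 - PowerSeries.C (R := ℤ) (m : ℤ) * PowerSeries.X + PowerSeries.X ^ 2) : PowerSeries ℤ)
        = Stmt14.G m * Stmt14.S m from rfl]
    rw [h4, map_sub, Stmt14.inverse_G, PowerSeries.coeff_mk]
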